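/- (The representing map of a super-map preserves convolution.) Fix m₁, m₂, m₃, m₄ and let V := (Matrix (Fin m₁) (Fin m₁) ℂ →ₗ[ℂ] Matrix (Fin m₂) (Fin m₂) ℂ) and W := (Matrix (Fin m₃) (Fin m₃) ℂ →ₗ[ℂ] Matrix (Fin m₄) (Fin m₄) ℂ). For ℂ-linear super-maps Θ₁, Θ₂ : V → W, define their convolution Θ₁ ⋆ Θ₂ : V → W as the unique ℂ-linear map with (Θ₁ ⋆ Θ₂)(𝓔_{ijkl}) = ∑_{p ∈ Fin m₂, q ∈ Fin m₁} Θ₁(𝓔_{ipkq}) * Θ₂(𝓔_{pjql}), where * on W is map convolution. Define the representing map T_Θ : Matrix (Fin m₁ × Fin m₂) (Fin m₁ × Fin m₂) ℂ → Matrix (Fin m₃ × Fin m₄) (Fin m₃ × Fin m₄) ℂ by T_Θ(X) := C_{Θ(Γ_X)}, where Γ_X is the unique linear map in V with Choi matrix X. Then T_{Θ₁ ⋆ Θ₂} = T_{Θ₁} * T_{Θ₂}, where * on representing maps is the convolution with respect to the matrix units of Matrix (Fin m₁ × Fin m₂) (Fin m₁ × Fin m₂) ℂ: (T₁ * T₂)(E_{αβ})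 = ∑_{γ ∈ Fin m₁ × Fin m₂} T₁(E_{αγ}) * T₂(E_{γβ}) for all matrix units E_{αβ}. -/

import Mathlib

/-!
STATEMENT 17: The representing map of a super-map preserves convolution:
for super-maps `Θ₁, Θ₂ : V → W` (with `V`, `W` spaces of linear maps between matrix
algebras), the representing map of `Θ₁ ⋆ Θ₂` is the convolution of the representing maps
of `Θ₁` and `Θ₂`: `T_{Θ₁ ⋆ Θ₂} = T_{Θ₁} * T_{Θ₂}`.
-/

namespace Stmt17

/-- The basis super-map `𝓔_{ijkl} : A ↦ (A k l) • e_{ij}`. -/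
noncomputable def basisMap {r s : ℕ} (i j : Fin s) (k l : Fin r) :
    Matrix (Fin r) (Fin r) ℂ →ₗ[ℂ] Matrix (Fin s) (Fin s) ℂ where
  toFun A := A k l • Matrix.single i j 1
  map_add' A B := by simp [Matrix.add_apply, add_smul]
  map_smul' c A := by simp [Matrix.smul_apply, smul_smul]

/-- The convolution of two linear maps `Φ Ψ`: the unique ℂ-linear map with
`(Φ * Ψ)(e_{ij}) = ∑ k, Φ(e_{ik}) * Ψ(e_{kj})`. -/
noncomputable def conv {r s : ℕ}
    (Φ Ψ : Matrix (Fin r) (Fin r) ℂ →ₗ[ℂ] Matrix (Fin s) (Fin s) ℂ) :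
    Matrix (Fin r) (Fin r) ℂ →ₗ[ℂ] Matrix (Fin s) (Fin s) ℂ :=
  (Matrix.stdBasis ℂ (Fin r) (Fin r)).constr ℂ fun p =>
    ∑ k : Fin r, Φ (Matrix.single p.1 k 1) * Ψ (Matrix.single k p.2 1)

/-- The Choi matrix of a linear map `Φ`, with entries
`C_Φ ((i,a),(j,b)) = (Φ e_{ij}) a b`. -/
noncomputable def choi {r s : ℕ}
    (Φ : Matrix (Fin r) (Fin r) ℂ →ₗ[ℂ] Matrix (Fin s) (Fin s) ℂ) :
    Matrix (Fin r × Fin s) (Fin r × Fin s) ℂ :=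
  Matrix.of fun p q => Φ (Matrix.single p.1 q.1 1) p.2 q.2

/-- `Γ_X`: the unique linear map whose Choi matrix is `X` (the inverse of `choi`),
determined by `Γ_X (e_{ij}) a b = X (i,a) (j,b)`. -/
noncomputable def gamma {r s : ℕ} (X : Matrix (Fin r × Fin s) (Fin r × Fin s) ℂ) :
    Matrix (Fin r) (Fin r) ℂ →ₗ[ℂ] Matrix (Fin s) (Fin s) ℂ :=
  (Matrix.stdBasis ℂ (Fin r) (Fin r)).constr ℂ fun p =>
    Matrix.of fun a b => X (p.1, a) (p.2, b)

lemma conv_std {r s : ℕ} (Φ Ψ : Matrix (Fin r) (Fin r) ℂ →ₗ[ℂ] Matrix (Fin s) (Fin s) ℂ)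
    (i j : Fin r) :
    conv Φ Ψ (Matrix.single i j 1) =
      ∑ k : Fin r, Φ (Matrix.single i k 1) * Ψ (Matrix.single k j 1) := by
  have := (Matrix.stdBasis ℂ (Fin r) (Fin r)).constr_basis ℂ
    (fun p => ∑ k : Fin r, Φ (Matrix.single p.1 k 1) * Ψ (Matrix.single k p.2 1))
    (i, j)
  rwa [Matrix.stdBasis_eq_single] at this

lemma gamma_std {r s : ℕ} (X : Matrix (Fin r × Fin s) (Fin r × Fin s) ℂ) (i j : Fin r) :
    gamma X (Matrix.single i j 1) = Matrix.of fun a b => X (i, a) (j, b) := by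
  have := (Matrix.stdBasis ℂ (Fin r) (Fin r)).constr_basis ℂ
    (fun p => (Matrix.of fun a b => X (p.1, a) (p.2, b))) (i, j)
  rwa [Matrix.stdBasis_eq_single] at this

lemma gamma_stdBasisMatrix {r s : ℕ} (i j : Fin r) (a b : Fin s) :
    gamma (Matrix.single (i, a) (j, b) (1 : ℂ)) = basisMap a b i j := by
  apply (Matrix.stdBasis ℂ (Fin r) (Fin r)).ext
  rintro ⟨k, l⟩
  rw [Matrix.stdBasis_eq_single, gamma_std]
  ext c d
  simp [basisMap, Matrix.single, Matrix.smul_apply, Prod.ext_iff]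
  aesop

lemma choi_conv {r s : ℕ} (Φ Ψ : Matrix (Fin r) (Fin r) ℂ →ₗ[ℂ] Matrix (Fin s) (Fin s) ℂ) :
    choi (conv Φ Ψ) = choi Φ * choi Ψ := by
  ext ⟨k, c⟩ ⟨l, d⟩
  simp only [choi, Matrix.of_apply, conv_std, Matrix.mul_apply, Matrix.sum_apply,
    Fintype.sum_prod_type]


lemma choi_add {r s : ℕ} (Φ Ψ : Matrix (Fin r) (Fin r) ℂ →ₗ[ℂ] Matrix (Fin s) (Fin s) ℂ) :
    choi (Φ + Ψ) = choi Φ + choi Ψ := by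
  ext ⟨k, c⟩ ⟨l, d⟩; simp [choi]

lemma choi_smul {r s : ℕ} (c : ℂ) (Φ : Matrix (Fin r) (Fin r) ℂ →ₗ[ℂ] Matrix (Fin s) (Fin s) ℂ) :
    choi (c • Φ) = c • choi Φ := by
  ext ⟨k, e⟩ ⟨l, d⟩; simp [choi]

lemma choi_sum {r s ι : ℕ} (f : Fin ι → (Matrix (Fin r) (Fin r) ℂ →ₗ[ℂ] Matrix (Fin s) (Fin s) ℂ)) :
    choi (∑ i, f i) = ∑ i, choi (f i) := by
  ext ⟨k, c⟩ ⟨l, d⟩; simp [choi, Matrix.sum_apply]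

lemma gamma_add {r s : ℕ} (X Y : Matrix (Fin r × Fin s) (Fin r × Fin s) ℂ) :
    gamma (X + Y) = gamma X + gamma Y := by
  apply (Matrix.stdBasis ℂ (Fin r) (Fin r)).ext
  rintro ⟨i, j⟩
  rw [Matrix.stdBasis_eq_single]
  simp only [LinearMap.add_apply, gamma_std]
  ext a b; simp

lemma gamma_smul {r s : ℕ} (c : ℂ) (X : Matrix (Fin r × Fin s) (Fin r × Fin s) ℂ) :
    gamma (c • X) = c • gamma X := by
  apply (Matrix.stdBasis ℂ (Fin r) (Fin r)).ext
  rintro ⟨i, j⟩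
  rw [Matrix.stdBasis_eq_single]
  simp only [LinearMap.smul_apply, gamma_std]
  ext a b; simp

theorem representing_map_preserves_convolution {m₁ m₂ m₃ m₄ : ℕ}
    (Θ₁ Θ₂ Θ : (Matrix (Fin m₁) (Fin m₁) ℂ →ₗ[ℂ] Matrix (Fin m₂) (Fin m₂) ℂ) →ₗ[ℂ]
      (Matrix (Fin m₃) (Fin m₃) ℂ →ₗ[ℂ] Matrix (Fin m₄) (Fin m₄) ℂ))
    -- `Θ` is the super-map convolution `Θ₁ ⋆ Θ₂`
    (hΘ : ∀ (i j : Fin m₂) (k l : Fin m₁),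
      Θ (basisMap i j k l) =
        ∑ p : Fin m₂, ∑ q : Fin m₁,
          conv (Θ₁ (basisMap i p k q)) (Θ₂ (basisMap p j q l)))
    (T : Matrix (Fin m₁ × Fin m₂) (Fin m₁ × Fin m₂) ℂ →ₗ[ℂ]
      Matrix (Fin m₃ × Fin m₄) (Fin m₃ × Fin m₄) ℂ)
    -- `T` is the convolution `T_{Θ₁} * T_{Θ₂}` of the representing maps,
    -- with respect to the matrix units of `Matrix (Fin m₁ × Fin m₂) _ ℂ`
    (hT : ∀ α β : Fin m₁ × Fin m₂,
      T (Matrix.single α β 1) =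
        ∑ γ : Fin m₁ × Fin m₂,
          choi (Θ₁ (gamma (Matrix.single α γ 1))) *
            choi (Θ₂ (gamma (Matrix.single γ β 1)))) :
    -- the representing map `T_Θ : X ↦ C_{Θ(Γ_X)}` of `Θ = Θ₁ ⋆ Θ₂` equals `T`
    ∀ X : Matrix (Fin m₁ × Fin m₂) (Fin m₁ × Fin m₂) ℂ,
      choi (Θ (gamma X)) = T X := by
  -- package the LHS as a linear map
  let L : Matrix (Fin m₁ × Fin m₂) (Fin m₁ × Fin m₂) ℂ →ₗ[ℂ]
      Matrix (Fin m₃ × Fin m₄) (Fin m₃ × Fin m₄) ℂ :=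
    { toFun := fun X => choi (Θ (gamma X))
      map_add' := fun X Y => by show choi (Θ (gamma (X + Y))) = _; rw [gamma_add, map_add, choi_add]
      map_smul' := fun c X => by show choi (Θ (gamma (c • X))) = _; rw [gamma_smul, map_smul, choi_smul]; rfl }
  have hbasis : ∀ α β : Fin m₁ × Fin m₂,
      choi (Θ (gamma (Matrix.single α β 1))) = T (Matrix.single α β 1) := by
    rintro ⟨i, a⟩ ⟨j, b⟩
    rw [hT, gamma_stdBasisMatrix, hΘ]
    have : ∀ γ : Fin m₁ × Fin m₂,
        choi (Θ₁ (gamma (Matrix.single (i, a) γ 1))) *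
          choi (Θ₂ (gamma (Matrix.single γ (j, b) 1))) =
        choi (Θ₁ (basisMap a γ.2 i γ.1)) * choi (Θ₂ (basisMap γ.2 b γ.1 j)) := by
      rintro ⟨q, p⟩
      rw [gamma_stdBasisMatrix, gamma_stdBasisMatrix]
    simp only [this, Fintype.sum_prod_type]
    rw [Finset.sum_comm]
    simp only [map_sum, choi_sum, choi_conv]
  intro X
  have : L = T := by
    apply (Matrix.stdBasis ℂ (Fin m₁ × Fin m₂) (Fin m₁ × Fin m₂)).ext
    rintro ⟨α, β⟩
    rw [Matrix.stdBasis_eq_single]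
    exact hbasis α β
  exact LinearMap.congr_fun this X


end Stmt17
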